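/- Let P1, P2, λ13, λ23, N2, N3 be positive reals and define, for λ12 > 0, R_CF(λ12) = (1/2)·log(1 + P1·λ13/N3 + P1·P2·λ12·λ23/(P1·(λ13·N2 + λ12·N3) + P2·λ23·N2 + N2·N3)). Then as λ12 → ∞, R_CF(λ12) converges to the finite value (1/2)·log(1 + P1·λ13/N3 + P2·λ23/N3); in particular R_CF(λ12) remains bounded as λ12 → ∞, while the broadcast cut-set bound (1/2)·log(1 + P1·λ13/N3 + P1·λ12/N2) tends to infinity. -/

import Mathlib

/-- At fixed relay power `P2`, as `λ12 → ∞`, the compress-and-forward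
rate `R_CF(λ12)` converges to the finite value `(1/2)log(1 + P1λ13/N3 + P2λ23/N3)`,
while the broadcast cut-set bound `(1/2)log(1 + P1λ13/N3 + P1λ12/N2)` tends to
infinity. -/
theorem stmt14 (P1 P2 lam13 lam23 N2 N3 : ℝ)
    (hP1 : 0 < P1) (hP2 : 0 < P2) (hl13 : 0 < lam13) (hl23 : 0 < lam23)
    (hN2 : 0 < N2) (hN3 : 0 < N3) :
    Filter.Tendsto
      (fun lam12 : ℝ => (1 / 2) * Real.log (1 + P1 * lam13 / N3 +
          P1 * P2 * lam12 * lam23 /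
            (P1 * (lam13 * N2 + lam12 * N3) + P2 * lam23 * N2 + N2 * N3)))
      Filter.atTop
      (nhds ((1 / 2) * Real.log (1 + P1 * lam13 / N3 + P2 * lam23 / N3))) ∧
    Filter.Tendsto
      (fun lam12 : ℝ => (1 / 2) * Real.log (1 + P1 * lam13 / N3 + P1 * lam12 / N2))
      Filter.atTop Filter.atTop := by
  constructor
  · -- First limit
    set C : ℝ := P1 * lam13 * N2 + P2 * lam23 * N2 + N2 * N3 with hC
    have hfrac : Filter.Tendsto
        (fun lam12 : ℝ => P1 * P2 * lam12 * lam23 /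
            (P1 * (lam13 * N2 + lam12 * N3) + P2 * lam23 * N2 + N2 * N3))
        Filter.atTop (nhds (P2 * lam23 / N3)) := by
      have heq : ∀ᶠ lam12 : ℝ in Filter.atTop,
          P1 * P2 * lam12 * lam23 /
            (P1 * (lam13 * N2 + lam12 * N3) + P2 * lam23 * N2 + N2 * N3)
          = (P1 * P2 * lam23) / (P1 * N3 + C / lam12) := by
        filter_upwards [Filter.eventually_gt_atTop 0] with x hx
        rw [hC]
        field_simp
        ring
      have hdenom : Filter.Tendsto (fun lam12 : ℝ => P1 * N3 + C / lam12)
          Filter.atTop (nhds (P1 * N3)) := by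
        have := (tendsto_const_nhds (x := C) (f := Filter.atTop (α := ℝ))).div_atTop
          Filter.tendsto_id
        simpa using (tendsto_const_nhds (x := P1 * N3)).add this
      have hlim : Filter.Tendsto
          (fun lam12 : ℝ => (P1 * P2 * lam23) / (P1 * N3 + C / lam12))
          Filter.atTop (nhds ((P1 * P2 * lam23) / (P1 * N3))) :=
        tendsto_const_nhds.div hdenom (by positivity)
      have : (P1 * P2 * lam23) / (P1 * N3) = P2 * lam23 / N3 := by
        field_simp
      rw [this] at hlim
      exact hlim.congr' (heq.mono fun x h => h.symm)
    have hinner : Filter.Tendsto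
        (fun lam12 : ℝ => 1 + P1 * lam13 / N3 +
          P1 * P2 * lam12 * lam23 /
            (P1 * (lam13 * N2 + lam12 * N3) + P2 * lam23 * N2 + N2 * N3))
        Filter.atTop (nhds (1 + P1 * lam13 / N3 + P2 * lam23 / N3)) :=
      tendsto_const_nhds.add hfrac
    exact (hinner.log (by positivity)).const_mul _
  · -- Second limit
    have hinner : Filter.Tendsto (fun lam12 : ℝ => 1 + P1 * lam13 / N3 + P1 * lam12 / N2)
        Filter.atTop Filter.atTop := by
      apply Filter.tendsto_atTop_add_const_left
      exact (Filter.tendsto_id.atTop_mul_const (by positivity : (0:ℝ) < P1 / N2)).congr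
        (by intro x; simp; ring)
    exact (Real.tendsto_log_atTop.comp hinner).const_mul_atTop (by norm_num)
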